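/- (Curriculum Property in Variable Selection, Proposition 1.) Let A ⊆ Fin L with |A| = M be such that Y is conditionally independent of X_{Aᶜ} given X_A, let λ ≥ 0 and M ≤ N₁ < N₂ ≤ L. Suppose F₁ ⊆ Fin L satisfies A ⊆ F₁ and |F₁| = N₁ (so that F₁ minimizes L_{N₁}(·; x) at every x). Then for every set S ⊆ (Fin L) \ F₁ with |S| = N₂ − N₁, the set F₂ = F₁ ∪ S satisfies |F₂| = N₂, L_{N₂}(F₂; x) = 0, and F₂ minimizes L_{N₂}(·; x) over all subsets of Fin L, for every x with P(X = x) > 0. -/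
import Mathlib


open scoped Classical
open Finset

/-- Probability of an event under a (finite) probability mass `P`. -/
noncomputable def pr {Ω : Type*} [Fintype Ω] (P : Ω → ℝ) (E : Ω → Prop) : ℝ :=
  ∑ ω, if E ω then P ω else 0

/-- Conditional probability `P(E | C)`. -/
noncomputable def condPr {Ω : Type*} [Fintype Ω] (P : Ω → ℝ) (E C : Ω → Prop) : ℝ :=
  pr P (fun ω => E ω ∧ C ω) / pr P C

/-- The event `{X_F = x_F}`, i.e. `X ω` agrees with `x` on the index set `F`. -/
def evSel {Ω V : Type*} {L : ℕ} (X : Ω → Fin L → V) (F : Finset (Fin L))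
    (x : Fin L → V) : Ω → Prop :=
  fun ω => ∀ i ∈ F, X ω i = x i

/-- Kullback–Leibler divergence between two pmfs on a finite type. -/
noncomputable def klDiv {𝒴 : Type*} [Fintype 𝒴] (p q : 𝒴 → ℝ) : ℝ :=
  ∑ y, p y * Real.log (p y / q y)

/-- The conditional distribution `P(Y = · | C)`. -/
noncomputable def condDist {Ω 𝒴 : Type*} [Fintype Ω] (P : Ω → ℝ) (Y : Ω → 𝒴)
    (C : Ω → Prop) : 𝒴 → ℝ :=
  fun y => condPr P (fun ω => Y ω = y) C

/-- Per-instance INVASE objective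
`L_N(F; x) = KL(P(Y = · | X = x) ‖ P(Y = · | X_F = x_F)) + λ·| |F| − N |`. -/
noncomputable def invaseObj {Ω V 𝒴 : Type*} [Fintype Ω] [Fintype 𝒴] {L : ℕ}
    (P : Ω → ℝ) (X : Ω → Fin L → V) (Y : Ω → 𝒴) (lam : ℝ) (N : ℕ)
    (F : Finset (Fin L)) (x : Fin L → V) : ℝ :=
  klDiv (condDist P Y (fun ω => X ω = x)) (condDist P Y (evSel X F x))
    + lam * |(F.card : ℝ) - (N : ℝ)|

lemma pr_nonneg {Ω : Type*} [Fintype Ω] {P : Ω → ℝ} (hP : ∀ ω, 0 ≤ P ω) (E : Ω → Prop) :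
    0 ≤ pr P E :=
  Finset.sum_nonneg fun ω _ => by by_cases h : E ω <;> simp [h, hP ω]

lemma pr_mono {Ω : Type*} [Fintype Ω] {P : Ω → ℝ} (hP : ∀ ω, 0 ≤ P ω) {E E' : Ω → Prop}
    (h : ∀ ω, E ω → E' ω) : pr P E ≤ pr P E' :=
  Finset.sum_le_sum fun ω _ => by
    by_cases hE : E ω
    · simp [hE, h ω hE]
    · by_cases hE' : E' ω <;> simp [hE, hE', hP ω]

lemma pr_congr {Ω : Type*} [Fintype Ω] (P : Ω → ℝ) {E E' : Ω → Prop}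
    (h : ∀ ω, E ω ↔ E' ω) : pr P E = pr P E' := by
  unfold pr; exact Finset.sum_congr rfl fun ω _ => by simp [h ω]

lemma pr_sum_y {Ω 𝒴 : Type*} [Fintype Ω] [Fintype 𝒴] (P : Ω → ℝ) (Y : Ω → 𝒴)
    (C : Ω → Prop) : ∑ y, pr P (fun ω => Y ω = y ∧ C ω) = pr P C := by
  unfold pr
  rw [Finset.sum_comm]
  refine Finset.sum_congr rfl fun ω _ => ?_
  by_cases hC : C ω
  · simp [hC]
  · simp [hC]

lemma pr_fiber {Ω V : Type*} [Fintype Ω] [Fintype V] {L : ℕ} (P : Ω → ℝ)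
    (X : Ω → Fin L → V) (Q : Ω → Prop) (F : Finset (Fin L)) (x : Fin L → V) :
    pr P (fun ω => Q ω ∧ evSel X F x ω)
      = ∑ x' ∈ Finset.univ.filter (fun x' : Fin L → V => ∀ i ∈ F, x' i = x i),
          pr P (fun ω => Q ω ∧ X ω = x') := by
  unfold pr
  rw [Finset.sum_comm]
  refine Finset.sum_congr rfl fun ω _ => ?_
  by_cases hQ : Q ω
  · by_cases hE : evSel X F x ω
    · have hmem : X ω ∈ Finset.univ.filter (fun x' : Fin L → V => ∀ i ∈ F, x' i = x i) := by
        simp only [Finset.mem_filter, Finset.mem_univ, true_and]; exact hE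
      simp [hQ, hE, Finset.sum_ite_eq, hmem]
    · have hmem : X ω ∉ Finset.univ.filter (fun x' : Fin L → V => ∀ i ∈ F, x' i = x i) := by
        simp only [Finset.mem_filter, Finset.mem_univ, true_and]; exact hE
      simp [hQ, hE, Finset.sum_ite_eq, hmem]
  · simp [hQ]

lemma gibbs {𝒴 : Type*} [Fintype 𝒴] (p q : 𝒴 → ℝ) (hp : ∀ y, 0 ≤ p y)
    (hps : ∑ y, p y = 1) (hq : ∀ y, 0 ≤ q y) (hqs : ∑ y, q y ≤ 1)
    (hpq : ∀ y, 0 < p y → 0 < q y) : 0 ≤ klDiv p q := by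
  have key : ∀ y, p y - (if 0 < p y then q y else 0) ≤ p y * Real.log (p y / q y) := by
    intro y
    by_cases hy : 0 < p y
    · have hqy := hpq y hy
      have h1 : Real.log (q y / p y) ≤ q y / p y - 1 :=
        Real.log_le_sub_one_of_pos (div_pos hqy hy)
      have h2 : Real.log (p y / q y) = - Real.log (q y / p y) := by
        rw [← Real.log_inv]; congr 1; field_simp
      have : 1 - q y / p y ≤ Real.log (p y / q y) := by rw [h2]; linarith
      have := mul_le_mul_of_nonneg_left this (le_of_lt hy)
      simp only [hy, if_pos]
      calc p y - q y = p y * (1 - q y / p y) := by field_simp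
        _ ≤ p y * Real.log (p y / q y) := this
    · have : p y = 0 := le_antisymm (not_lt.mp hy) (hp y)
      simp [this, hy]
  calc (0:ℝ) ≤ ∑ y, (p y - (if 0 < p y then q y else 0)) := by
        rw [Finset.sum_sub_distrib, hps]
        have : ∑ y, (if 0 < p y then q y else 0) ≤ ∑ y, q y :=
          Finset.sum_le_sum fun y _ => by by_cases h : 0 < p y <;> simp [h, hq y]
        linarith
    _ ≤ ∑ y, p y * Real.log (p y / q y) := Finset.sum_le_sum fun y _ => key y
    _ = klDiv p q := rfl

lemma condDist_eq_of_CI {Ω V 𝒴 : Type*} [Fintype Ω] [Fintype V] [Fintype 𝒴] {L : ℕ}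
    (P : Ω → ℝ) (X : Ω → Fin L → V) (Y : Ω → 𝒴) (hP : ∀ ω, 0 ≤ P ω)
    (A F : Finset (Fin L)) (hAF : A ⊆ F)
    (hCI : ∀ (x : Fin L → V) (y : 𝒴), 0 < pr P (evSel X A x) →
      pr P (fun ω => Y ω = y ∧ X ω = x) * pr P (evSel X A x)
        = pr P (fun ω => Y ω = y ∧ evSel X A x ω) * pr P (fun ω => X ω = x))
    (x : Fin L → V) (hx : 0 < pr P (fun ω => X ω = x)) :
    condDist P Y (fun ω => X ω = x) = condDist P Y (evSel X F x) := by
  have hsub : ∀ (G : Finset (Fin L)) ω, X ω = x → evSel X G x ω := by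
    intro G ω h i _; rw [h]
  have hprG : ∀ G : Finset (Fin L), 0 < pr P (evSel X G x) :=
    fun G => lt_of_lt_of_le hx (pr_mono hP (hsub G))
  have hc : 0 < pr P (evSel X A x) := hprG A
  funext y
  set c := pr P (evSel X A x) with hcdef
  set a := pr P (fun ω => Y ω = y ∧ evSel X A x ω) with hadef
  -- the key identity at any x' agreeing with x on F (hence on A)
  have key : ∀ x' : Fin L → V, (∀ i ∈ F, x' i = x i) →
      pr P (fun ω => Y ω = y ∧ X ω = x') * c = a * pr P (fun ω => X ω = x') := by
    intro x' hx'
    have hAx' : ∀ i ∈ A, x' i = x i := fun i hi => hx' i (hAF hi)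
    have hEq : ∀ ω, evSel X A x' ω ↔ evSel X A x ω := by
      intro ω
      constructor <;> intro h i hi
      · rw [← hAx' i hi]; exact h i hi
      · rw [hAx' i hi]; exact h i hi
    have hc' : pr P (evSel X A x') = c := pr_congr P hEq
    have ha' : pr P (fun ω => Y ω = y ∧ evSel X A x' ω) = a :=
      pr_congr P (fun ω => and_congr_right fun _ => hEq ω)
    have := hCI x' y (by rw [hc']; exact hc)
    rw [hc', ha'] at this
    exact this
  -- decompose the events over the fibers of X restricted to F
  have hfib1 := pr_fiber P X (fun ω => Y ω = y) F x
  have hfib2 := pr_fiber P X (fun _ : Ω => True) F x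
  have hprF : pr P (evSel X F x) = ∑ x' ∈ Finset.univ.filter
      (fun x' : Fin L → V => ∀ i ∈ F, x' i = x i), pr P (fun ω => X ω = x') :=
    calc pr P (evSel X F x) = pr P (fun ω => True ∧ evSel X F x ω) :=
          pr_congr P (fun ω => by simp)
      _ = ∑ x' ∈ Finset.univ.filter (fun x' : Fin L → V => ∀ i ∈ F, x' i = x i),
            pr P (fun ω => True ∧ X ω = x') := hfib2
      _ = ∑ x' ∈ Finset.univ.filter (fun x' : Fin L → V => ∀ i ∈ F, x' i = x i),
            pr P (fun ω => X ω = x') :=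
          Finset.sum_congr rfl fun x' _ => pr_congr P (fun ω => by simp)
  have h2 : pr P (fun ω => Y ω = y ∧ evSel X F x ω) * c = a * pr P (evSel X F x) := by
    rw [hfib1, hprF, Finset.sum_mul, Finset.mul_sum]
    exact Finset.sum_congr rfl fun x' hx' =>
      key x' (by simpa using (Finset.mem_filter.mp hx').2)
  have h1 : pr P (fun ω => Y ω = y ∧ X ω = x) * c = a * pr P (fun ω => X ω = x) :=
    hCI x y hc
  -- conclude
  show condPr P (fun ω => Y ω = y) (fun ω => X ω = x)
      = condPr P (fun ω => Y ω = y) (evSel X F x)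
  unfold condPr
  rw [div_eq_div_iff hx.ne' (hprG F).ne']
  have hcancel : pr P (fun ω => Y ω = y ∧ X ω = x) * pr P (evSel X F x) * c
      = pr P (fun ω => Y ω = y ∧ evSel X F x ω) * pr P (fun ω => X ω = x) * c := by
    linear_combination pr P (evSel X F x) * h1 - pr P (fun ω => X ω = x) * h2
  exact mul_right_cancel₀ hc.ne' hcancel

lemma klDiv_self_eq_zero {𝒴 : Type*} [Fintype 𝒴] (p : 𝒴 → ℝ) : klDiv p p = 0 :=
  Finset.sum_eq_zero fun y _ => by
    rcases eq_or_ne (p y) 0 with h | h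
    · simp [h]
    · simp [div_self h]

/-- **Curriculum property in variable selection** (Proposition 1). If `F₁ ⊇ A` has
cardinality `N₁`, then for any set `S` of `N₂ − N₁` indices outside `F₁`, the set
`F₂ = F₁ ∪ S` has cardinality `N₂`, achieves `L_{N₂}(F₂; x) = 0`, and minimizes
`L_{N₂}(·; x)` over all subsets, at every `x` with `P(X = x) > 0`. -/
theorem stmt2 {Ω V 𝒴 : Type*} [Fintype Ω] [Fintype V] [Fintype 𝒴] {L M N₁ N₂ : ℕ}
    (X : Ω → Fin L → V) (Y : Ω → 𝒴) (P : Ω → ℝ)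
    (hP : ∀ ω, 0 ≤ P ω) (hPsum : ∑ ω, P ω = 1)
    (A : Finset (Fin L)) (hAcard : A.card = M)
    (hCI : ∀ (x : Fin L → V) (y : 𝒴), 0 < pr P (evSel X A x) →
      pr P (fun ω => Y ω = y ∧ X ω = x) * pr P (evSel X A x)
        = pr P (fun ω => Y ω = y ∧ evSel X A x ω) * pr P (fun ω => X ω = x))
    (lam : ℝ) (hlam : 0 ≤ lam) (hMN₁ : M ≤ N₁) (hN₁N₂ : N₁ < N₂) (hN₂L : N₂ ≤ L)
    (F₁ : Finset (Fin L)) (hAF₁ : A ⊆ F₁) (hF₁card : F₁.card = N₁)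
    (S : Finset (Fin L)) (hS : S ⊆ F₁ᶜ) (hScard : S.card = N₂ - N₁) :
    (F₁ ∪ S).card = N₂ ∧
      ∀ x : Fin L → V, 0 < pr P (fun ω => X ω = x) →
        invaseObj P X Y lam N₂ (F₁ ∪ S) x = 0 ∧
          ∀ F' : Finset (Fin L),
            invaseObj P X Y lam N₂ (F₁ ∪ S) x ≤ invaseObj P X Y lam N₂ F' x := by
  have hdisj : Disjoint F₁ S := Finset.disjoint_right.mpr fun a haS => by
    simpa using hS haS
  have hcard : (F₁ ∪ S).card = N₂ := by
    rw [Finset.card_union_of_disjoint hdisj, hF₁card, hScard]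
    omega
  refine ⟨hcard, fun x hx => ?_⟩
  have hsub : ∀ (G : Finset (Fin L)) ω, X ω = x → evSel X G x ω := by
    intro G ω h i _; rw [h]
  have hprG : ∀ G : Finset (Fin L), 0 < pr P (evSel X G x) :=
    fun G => lt_of_lt_of_le hx (pr_mono hP (hsub G))
  have hAF₂ : A ⊆ F₁ ∪ S := hAF₁.trans Finset.subset_union_left
  have heq : condDist P Y (fun ω => X ω = x) = condDist P Y (evSel X (F₁ ∪ S) x) :=
    condDist_eq_of_CI P X Y hP A (F₁ ∪ S) hAF₂ hCI x hx
  have hzero : invaseObj P X Y lam N₂ (F₁ ∪ S) x = 0 := by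
    unfold invaseObj
    rw [heq, klDiv_self_eq_zero, hcard]
    simp
  refine ⟨hzero, fun F' => ?_⟩
  rw [hzero]
  unfold invaseObj
  have hKL : 0 ≤ klDiv (condDist P Y (fun ω => X ω = x)) (condDist P Y (evSel X F' x)) := by
    apply gibbs
    · intro y
      exact div_nonneg (pr_nonneg hP _) (pr_nonneg hP _)
    · show ∑ y, pr P (fun ω => Y ω = y ∧ X ω = x) / pr P (fun ω => X ω = x) = 1
      rw [← Finset.sum_div, pr_sum_y, div_self hx.ne']
    · intro y
      exact div_nonneg (pr_nonneg hP _) (pr_nonneg hP _)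
    · show ∑ y, pr P (fun ω => Y ω = y ∧ evSel X F' x ω) / pr P (evSel X F' x) ≤ 1
      rw [← Finset.sum_div, pr_sum_y, div_self (hprG F').ne']
    · intro y hy
      have hnum : 0 < pr P (fun ω => Y ω = y ∧ X ω = x) := by
        by_contra h
        push_neg at h
        have : condDist P Y (fun ω => X ω = x) y ≤ 0 :=
          div_nonpos_of_nonpos_of_nonneg h (pr_nonneg hP _)
        exact absurd hy (not_lt.mpr this)
      have hnum' : 0 < pr P (fun ω => Y ω = y ∧ evSel X F' x ω) :=
        lt_of_lt_of_le hnum (pr_mono hP fun ω h => ⟨h.1, hsub F' ω h.2⟩)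
      exact div_pos hnum' (hprG F')
  have habs : 0 ≤ lam * |((F' : Finset (Fin L)).card : ℝ) - (N₂ : ℝ)| :=
    mul_nonneg hlam (abs_nonneg _)
  linarith
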